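/- For every real z with |z| < 2, the series Σ_{s=0}^{∞} (−1)^s · z^{2s+1} / ((2s+1) · C(2s, s)) converges to 4·arcsinh(z/2)/√(4 + z²); that is, the function z ↦ 4·arcsinh(z/2)/√(4 + z²) has the power-series representation with coefficients (−1)^s/((2s+1)·C(2s,s)) at the odd powers z^{2s+1}. -/

import Mathlib

open Real Filter Set Topology

noncomputable def aa (s : ℕ) : ℝ :=
  (-1) ^ s / ((2 * (s : ℝ) + 1) * (Nat.centralBinom s : ℝ))

lemma four_pow_le (s : ℕ) : (4 : ℕ) ^ s ≤ (2 * s + 1) * Nat.centralBinom s := by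
  induction s with
  | zero => simp [Nat.centralBinom]
  | succ n ih =>
    have h := Nat.succ_mul_centralBinom_succ n
    calc (4:ℕ) ^ (n+1) = 4 * 4 ^ n := by ring
    _ ≤ 4 * ((2*n+1) * Nat.centralBinom n) := Nat.mul_le_mul_left 4 ih
    _ = 2 * ((n+1) * Nat.centralBinom (n+1)) := by rw [h]; ring
    _ ≤ (2*(n+1)+1) * Nat.centralBinom (n+1) := by
        nlinarith [Nat.centralBinom_pos (n+1)]

lemma cb_pos (s : ℕ) : (0:ℝ) < (2 * (s:ℝ) + 1) * (Nat.centralBinom s : ℝ) := by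
  have h1 : (0:ℝ) < (Nat.centralBinom s : ℝ) := by exact_mod_cast Nat.centralBinom_pos s
  positivity

lemma abs_aa (s : ℕ) : |aa s| ≤ (1/4 : ℝ) ^ s := by
  rw [aa, abs_div, abs_pow, abs_neg, abs_one, one_pow, abs_of_pos (cb_pos s)]
  rw [div_pow, one_pow]
  apply one_div_le_one_div_of_le (by positivity)
  exact_mod_cast four_pow_le s

lemma aa_rec (s : ℕ) : 4 * (2 * (s:ℝ) + 3) * aa (s+1) = -((2 * (s:ℝ) + 2) * aa s) := by
  have h' : ((s:ℝ)+1) * (Nat.centralBinom (s+1) : ℝ)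
      = 2 * (2*(s:ℝ)+1) * (Nat.centralBinom s : ℝ) := by
    exact_mod_cast Nat.succ_mul_centralBinom_succ s
  have c1 : (Nat.centralBinom s : ℝ) ≠ 0 := by
    exact_mod_cast (Nat.centralBinom_pos s).ne'
  have c2 : (Nat.centralBinom (s+1) : ℝ) ≠ 0 := by
    exact_mod_cast (Nat.centralBinom_pos (s+1)).ne'
  have e1 : (2*(s:ℝ)+1) ≠ 0 := by positivity
  have e2 : (2*((s:ℝ)+1)+1) ≠ 0 := by positivity
  rw [aa, aa]
  push_cast
  field_simp
  linear_combination (2*(2*(s:ℝ)+3)*(-1)^s) * h'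

lemma summable_aux {q : ℝ} (hq : |q| < 1) :
    Summable (fun s : ℕ => (2*(s:ℝ)+1) * q ^ s) := by
  have h1 : Summable (fun s : ℕ => ((s:ℝ))^1 * q ^ s) :=
    summable_pow_mul_geometric_of_norm_lt_one 1 (by rwa [Real.norm_eq_abs])
  have h2 : Summable (fun s : ℕ => q ^ s) :=
    summable_geometric_of_norm_lt_one (by rwa [Real.norm_eq_abs])
  exact ((h1.mul_left 2).add h2).congr (fun s => by ring)

lemma hq_of_abs_lt {x : ℝ} (hx : |x| < 2) : |x^2/4| < 1 := by
  rw [abs_of_nonneg (by positivity)]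
  nlinarith [abs_nonneg x, sq_abs x]

lemma bD (s : ℕ) {y r : ℝ} (hy : |y| ≤ r) :
    ‖(2*(s:ℝ)+1) * aa s * y^(2*s)‖ ≤ (2*(s:ℝ)+1) * (r^2/4)^s := by
  have h0 : (0:ℝ) ≤ r := le_trans (abs_nonneg y) hy
  rw [Real.norm_eq_abs, abs_mul, abs_mul, abs_pow,
    abs_of_pos (show (0:ℝ) < 2*(s:ℝ)+1 by positivity)]
  calc (2*(s:ℝ)+1) * |aa s| * |y|^(2*s)
      ≤ (2*(s:ℝ)+1) * ((1/4:ℝ)^s) * (r^(2*s)) := by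
        gcongr
        all_goals first | exact abs_aa s | exact hy
    _ = (2*(s:ℝ)+1) * (r^2/4)^s := by
        rw [div_pow, div_pow, one_pow, pow_mul]
        ring

lemma summable_D {x : ℝ} (hx : |x| < 2) :
    Summable (fun s : ℕ => (2*(s:ℝ)+1) * aa s * x^(2*s)) :=
  Summable.of_norm_bounded
    (summable_aux (q := |x|^2/4) (by rw [sq_abs]; exact hq_of_abs_lt hx))
    (fun s => bD s le_rfl)

lemma summable_g {x : ℝ} (hx : |x| < 2) :
    Summable (fun s : ℕ => aa s * x ^ (2*s+1)) := by
  have hgeo : Summable (fun s : ℕ => 2 * ((x^2/4)^s)) :=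
    (summable_geometric_of_norm_lt_one (K := ℝ) (x := x^2/4)
      (by rw [Real.norm_eq_abs]; exact hq_of_abs_lt hx)).mul_left 2
  apply Summable.of_norm_bounded hgeo
  intro s
  rw [Real.norm_eq_abs, abs_mul, abs_pow]
  calc |aa s| * |x|^(2*s+1) ≤ (1/4:ℝ)^s * |x|^(2*s+1) := by
        gcongr; exact abs_aa s
    _ = (1/4:ℝ)^s * ((x^2)^s * |x|) := by rw [pow_succ, pow_mul, sq_abs]
    _ ≤ (1/4:ℝ)^s * ((x^2)^s * 2) := by
        gcongr
        all_goals first | positivity | exact hx.le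
    _ = 2 * ((x^2/4)^s) := by
        rw [div_pow, div_pow, one_pow]
        ring

noncomputable def gg (x : ℝ) : ℝ := ∑' s : ℕ, aa s * x ^ (2*s+1)
noncomputable def DD (x : ℝ) : ℝ := ∑' s : ℕ, (2*(s:ℝ)+1) * aa s * x ^ (2*s)

lemma hasDerivAt_g {x : ℝ} (hx : |x| < 2) : HasDerivAt gg (DD x) x := by
  set r := (|x| + 2)/2 with hr
  have hr1 : |x| < r := by rw [hr]; linarith
  have hr2 : r < 2 := by rw [hr]; linarith
  have hr0 : (0:ℝ) < r := lt_of_le_of_lt (abs_nonneg x) hr1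
  have hq : |r^2/4| < 1 := hq_of_abs_lt (by rwa [abs_of_pos hr0])
  have hu : Summable (fun s : ℕ => (2*(s:ℝ)+1) * (r^2/4)^s) := summable_aux hq
  have hmem : x ∈ Ioo (-r) r := by
    constructor <;> [linarith [neg_abs_le x]; linarith [le_abs_self x]]
  exact hasDerivAt_tsum_of_isPreconnected
    (g := fun (n : ℕ) (y : ℝ) => aa n * y ^ (2*n+1))
    (g' := fun (n : ℕ) (y : ℝ) => (2*(n:ℝ)+1) * aa n * y ^ (2*n))
    hu isOpen_Ioo ((convex_Ioo _ _).isPreconnected)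
    (fun n y _ => by
      have h := (hasDerivAt_pow (2*n+1) y).const_mul (aa n)
      convert h using 1
      · rfl
      rw [Nat.add_sub_cancel]
      push_cast
      ring)
    (fun n y hy => bD n (abs_le.2 ⟨hy.1.le, hy.2.le⟩))
    (show (0:ℝ) ∈ Ioo (-r) r by constructor <;> simp [hr0] <;> linarith)
    (by
      have : ∀ n : ℕ, aa n * (0:ℝ) ^ (2*n+1) = 0 := fun n => by simp
      exact summable_zero.congr (fun n => (this n).symm))
    hmem

lemma key {x : ℝ} (hx : |x| < 2) : (4 + x^2) * DD x + x * gg x = 4 := by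
  have hq := hq_of_abs_lt hx
  have hsD : HasSum (fun s : ℕ => (2*(s:ℝ)+1) * aa s * x^(2*s)) (DD x) :=
    (summable_D hx).hasSum
  have hsg : HasSum (fun s : ℕ => aa s * x^(2*s+1)) (gg x) := (summable_g hx).hasSum
  have h1 := (hsD.mul_left (4+x^2)).add (hsg.mul_left x)
  set F : ℕ → ℝ := fun s => 4*(2*(s:ℝ)+1) * aa s * x^(2*s) with hF
  have hterm : ∀ s : ℕ,
      (4+x^2) * ((2*(s:ℝ)+1) * aa s * x^(2*s)) + x * (aa s * x^(2*s+1))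
        = F s - F (s+1) := by
    intro s
    have h := aa_rec s
    simp only [hF]
    push_cast
    linear_combination (x^(2*s)*x^2) * h
  have sumF : Summable F := by
    apply Summable.of_norm_bounded (g := fun s : ℕ => 4 * ((2*(s:ℝ)+1) * (|x|^2/4)^s))
      ((summable_aux (q := |x|^2/4) (by rw [sq_abs]; exact hq)).mul_left 4)
    intro s
    have hFs : F s = 4 * ((2*(s:ℝ)+1) * aa s * x^(2*s)) := by rw [hF]; ring
    rw [hFs, norm_mul, Real.norm_eq_abs (4:ℝ), abs_of_pos (by norm_num : (0:ℝ) < 4)]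
    gcongr
    exact bD s le_rfl
  have sumF' : Summable (fun s => F (s+1)) := (summable_nat_add_iff 1).2 sumF
  have hdiffsum : Summable (fun s => F s - F (s+1)) := sumF.sub sumF'
  have h3 : HasSum (fun s => F s - F (s+1)) (F 0) := by
    rw [hasSum_iff_tendsto_nat_of_summable_norm
      (by simpa [Real.norm_eq_abs] using hdiffsum.abs)]
    simp only [Finset.sum_range_sub']
    have hF0 : Tendsto F atTop (𝓝 0) := sumF.tendsto_atTop_zero
    simpa using tendsto_const_nhds.sub hF0
  have hF0val : F 0 = 4 := by
    simp [hF, aa, Nat.centralBinom]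
  have h4 : (∑' s : ℕ, ((4+x^2) * ((2*(s:ℝ)+1) * aa s * x^(2*s))
      + x * (aa s * x^(2*s+1)))) = (4+x^2) * DD x + x * gg x := h1.tsum_eq
  calc (4 + x^2) * DD x + x * gg x
      = (∑' s : ℕ, ((4+x^2) * ((2*(s:ℝ)+1) * aa s * x^(2*s))
          + x * (aa s * x^(2*s+1)))) := h4.symm
    _ = (∑' s : ℕ, (F s - F (s+1))) := tsum_congr hterm
    _ = F 0 := h3.tsum_eq
    _ = 4 := hF0val

lemma phi_deriv {x : ℝ} (hx : |x| < 2) :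
    HasDerivAt (fun y => gg y * Real.sqrt (4 + y^2) - 4 * Real.arsinh (y/2)) 0 x := by
  have h4 : (0:ℝ) < 4 + x^2 := by positivity
  have hs0 : (0:ℝ) < Real.sqrt (4+x^2) := Real.sqrt_pos.2 h4
  have hsq : Real.sqrt (4+x^2)^2 = 4+x^2 := Real.sq_sqrt h4.le
  have hinner : HasDerivAt (fun y : ℝ => 4 + y^2) (2*x) x := by
    simpa using (hasDerivAt_pow 2 x).const_add 4
  have hsqrt : HasDerivAt (fun y => Real.sqrt (4+y^2)) (x / Real.sqrt (4+x^2)) x := by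
    have h := (Real.hasDerivAt_sqrt h4.ne').comp x hinner
    refine h.congr_deriv ?_
    field_simp
  have hg := hasDerivAt_g hx
  have hars : HasDerivAt (fun y : ℝ => 4 * Real.arsinh (y/2)) (4 / Real.sqrt (4+x^2)) x := by
    have h1 : HasDerivAt (fun y : ℝ => y/2) (1/2 : ℝ) x := (hasDerivAt_id x).div_const 2
    have h2 := (h1.arsinh).const_mul 4
    refine h2.congr_deriv ?_
    have hsq2 : Real.sqrt (1+(x/2)^2) = Real.sqrt (4+x^2) / 2 := by
      rw [show (1+(x/2)^2 : ℝ) = (4+x^2)/4 by ring, Real.sqrt_div h4.le,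
        show (4:ℝ) = 2^2 by norm_num, Real.sqrt_sq (by norm_num : (0:ℝ) ≤ 2)]
    rw [smul_eq_mul, hsq2]
    field_simp
  have H := (hg.mul hsqrt).sub hars
  have hval : DD x * Real.sqrt (4+x^2) + gg x * (x / Real.sqrt (4+x^2))
      - 4 / Real.sqrt (4+x^2) = 0 := by
    have hk := key hx
    field_simp
    linear_combination hk + (DD x) * hsq
  rw [hval] at H
  exact H

theorem stmt_17 (z : ℝ) (hz : |z| < 2) :
    HasSum
      (fun s : ℕ =>
        (-1 : ℝ) ^ s * z ^ (2 * s + 1) / ((2 * s + 1) * (Nat.choose (2 * s) s : ℝ)))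
      (4 * Real.arsinh (z / 2) / Real.sqrt (4 + z ^ 2)) := by
  set c := (|z| + 2)/2 with hc
  have hc1 : |z| < c := by rw [hc]; linarith
  have hc2 : c < 2 := by rw [hc]; linarith
  have hc0 : (0:ℝ) < c := lt_of_le_of_lt (abs_nonneg z) hc1
  have habs : ∀ x ∈ Icc (-c) c, |x| < 2 := fun x hx => by
    rw [abs_lt]; constructor <;> [linarith [hx.1]; linarith [hx.2]]
  have hlt : -c < c := by linarith
  set φ : ℝ → ℝ := fun y => gg y * Real.sqrt (4 + y^2) - 4 * Real.arsinh (y/2) with hφ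
  have hdiff : DifferentiableOn ℝ φ (Icc (-c) c) := fun x hx =>
    ((phi_deriv (habs x hx)).differentiableAt).differentiableWithinAt
  have hderiv : ∀ x ∈ Ico (-c) c, derivWithin φ (Icc (-c) c) x = 0 := fun x hx =>
    ((phi_deriv (habs x ⟨hx.1, hx.2.le⟩)).hasDerivWithinAt).derivWithin
      ((uniqueDiffOn_Icc hlt) x ⟨hx.1, hx.2.le⟩)
  have hconst := constant_of_derivWithin_zero hdiff hderiv
  have hz_mem : z ∈ Icc (-c) c := by
    constructor <;> [linarith [neg_abs_le z]; linarith [le_abs_self z]]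
  have h0_mem : (0:ℝ) ∈ Icc (-c) c := ⟨by linarith, by linarith⟩
  have hg0 : gg 0 = 0 := by
    rw [gg]
    convert tsum_zero with s
    simp
  have hφ0 : φ 0 = 0 := by
    rw [hφ]
    simp [hg0]
  have hφz : φ z = 0 := by
    rw [hconst z hz_mem, ← hconst 0 h0_mem, hφ0]
  have hs0 : (0:ℝ) < Real.sqrt (4+z^2) := Real.sqrt_pos.2 (by positivity)
  have hggz : gg z = 4 * Real.arsinh (z/2) / Real.sqrt (4 + z^2) := by
    rw [eq_div_iff hs0.ne']
    have : gg z * Real.sqrt (4+z^2) - 4 * Real.arsinh (z/2) = 0 := hφz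
    linarith
  have hs := (summable_g hz).hasSum
  rw [show (∑' s : ℕ, aa s * z ^ (2*s+1)) = gg z from rfl, hggz] at hs
  have hfun : (fun s : ℕ =>
      (-1 : ℝ) ^ s * z ^ (2 * s + 1) / ((2 * s + 1) * (Nat.choose (2 * s) s : ℝ)))
      = fun s : ℕ => aa s * z ^ (2*s+1) := by
    funext s
    simp only [aa, Nat.centralBinom]
    ring
  rw [hfun]
  exact hs
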